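/- Let A be the k×k matrix over F_{q^n} with subdiagonal entries 1, last column (a_0,...,a_{k-1})^T with a_0 ≠ 0, and zeros elsewhere, and let σ = q^s with gcd(s,n)=1. Then A·A^σ·...·A^{σ^{n-1}} = I_k if and only if A·A^σ·...·A^{σ^{n-1}} fixes the standard basis vector e_0 = (1,0,...,0)^T. -/

import Mathlib

/-- With `A` the companion-type matrix (subdiagonal `1`s, last column
`(a_0, ..., a_{k-1})^T`, `a_0 ≠ 0`) and `σ = q^s`, `gcd(s,n) = 1`, one has
`A·A^σ·...·A^{σ^{n-1}} = I_k` iff this product fixes `e_0 = (1,0,...,0)^T`. -/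
theorem stmt5 (q n k s : ℕ) (hq : IsPrimePow q) (hn : 0 < n) (hk : 0 < k)
    (hs : Nat.gcd s n = 1)
    (L : Type*) [Field L] [Fintype L] (hL : Fintype.card L = q ^ n)
    (a : Fin k → L) (ha0 : a ⟨0, hk⟩ ≠ 0)
    (A : Matrix (Fin k) (Fin k) L)
    (hA : A = Matrix.of fun i j : Fin k =>
      if (i : ℕ) = (j : ℕ) + 1 then 1 else if (j : ℕ) = k - 1 then a i else 0)
    (B : Matrix (Fin k) (Fin k) L)
    (hB : B = ((List.range n).map (fun i => A.map (fun y => y ^ q ^ (s * i)))).prod) :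
    B = 1 ↔ B.mulVec (Pi.single ⟨0, hk⟩ 1) = Pi.single ⟨0, hk⟩ 1 := by
  constructor
  · intro h1
    rw [h1, Matrix.one_mulVec]
  intro h
  -- Get the characteristic
  obtain ⟨p, m, hp, hm, hpm⟩ := hq
  replace hp : p.Prime := Nat.prime_iff.mpr hp
  obtain ⟨p', hcp'⟩ := CharP.exists L
  haveI : CharP L p' := hcp'
  obtain ⟨d, hp', hcard⟩ := FiniteField.card L p'
  have hpp' : p = p' := by
    have hd1 : p ∣ p' ^ (d : ℕ) := by
      rw [← hcard, hL, ← hpm, ← pow_mul]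
      exact dvd_pow_self p (by positivity)
    have := hp.dvd_of_dvd_pow hd1
    exact ((Nat.prime_dvd_prime_iff_eq hp hp').mp this)
  subst hpp'
  haveI : Fact p.Prime := ⟨hp⟩
  haveI : ExpChar L p := ExpChar.prime hp
  -- the Frobenius-type ring hom x ↦ x ^ q ^ s
  set φ : L →+* L := iterateFrobenius L p (m * s) with hφ
  have hφ_apply : ∀ x : L, φ x = x ^ q ^ s := by
    intro x
    rw [hφ, iterateFrobenius_def, pow_mul, hpm]
  -- key identity : B * A = A * B.map φ
  have hmapA : ∀ i : ℕ, (A.map (fun y => y ^ q ^ (s * i))).map φ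
      = A.map (fun y => y ^ q ^ (s * (i + 1))) := by
    intro i
    ext x y
    simp only [Matrix.map_apply, hφ_apply, ← pow_mul, ← pow_add, Nat.mul_succ]
  have hA0 : A.map (fun y => y ^ q ^ (s * 0)) = A := by
    ext x y; simp [Matrix.map_apply]
  have hAn : A.map (fun y => y ^ q ^ (s * n)) = A := by
    ext x y
    simp only [Matrix.map_apply]
    rw [mul_comm s n, pow_mul, ← hL]
    exact FiniteField.pow_card_pow s (A x y)
  have hBA : B * A = A * B.map φ := by
    have hmapB : B.map φ
        = ((List.range n).map (fun i => A.map (fun y => y ^ q ^ (s * (i + 1))))).prod := by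
      have := map_list_prod (φ.mapMatrix (m := Fin k))
        ((List.range n).map (fun i => A.map (fun y => y ^ q ^ (s * i))))
      rw [hB]
      simp only [RingHom.mapMatrix_apply] at this
      rw [this, List.map_map]
      congr 1
      apply List.map_congr_left
      intro i _
      simp only [Function.comp_apply, RingHom.mapMatrix_apply, hmapA]
    calc B * A
        = ((List.range n).map (fun i => A.map (fun y => y ^ q ^ (s * i)))).prod
            * A.map (fun y => y ^ q ^ (s * n)) := by rw [hB, hAn]
      _ = ((List.range (n + 1)).map (fun i => A.map (fun y => y ^ q ^ (s * i)))).prod := by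
            rw [List.range_succ, List.map_append, List.prod_append, List.map_singleton,
              List.prod_singleton]
      _ = A * B.map φ := by
            rw [List.range_succ_eq_map, List.map_cons, List.prod_cons, hA0, hmapB,
              List.map_map]
            rfl
  -- B fixes each standard basis vector
  have key : ∀ j : ℕ, ∀ hj : j < k, B.mulVec (Pi.single ⟨j, hj⟩ 1) = Pi.single ⟨j, hj⟩ 1 := by
    intro j
    induction j with
    | zero => intro hj; exact h
    | succ j ih =>
      intro hj
      have hj' : j < k := Nat.lt_of_succ_lt hj
      have ihj := ih hj'
      -- B.map φ fixes e_j as well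
      have hφfix : (B.map φ).mulVec (Pi.single ⟨j, hj'⟩ 1) = Pi.single ⟨j, hj'⟩ 1 := by
        funext i
        have hB' : B i ⟨j, hj'⟩ = Pi.single (M := fun _ : Fin k => L) ⟨j, hj'⟩ 1 i := by
          have := congrFun ihj i
          simpa [Matrix.mulVec_single] using this
        have : (B.map φ).mulVec (Pi.single ⟨j, hj'⟩ 1) i = φ (B i ⟨j, hj'⟩) := by
          simp [Matrix.mulVec_single, Matrix.map_apply]
        rw [this, hB']
        rcases eq_or_ne i (⟨j, hj'⟩ : Fin k) with rfl | hne
        · simp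
        · simp [Pi.single_apply, hne]
      -- A sends e_j to e_{j+1}
      have hAe : A.mulVec (Pi.single ⟨j, hj'⟩ 1) = Pi.single ⟨j + 1, hj⟩ 1 := by
        funext i
        have hjk : (j : ℕ) ≠ k - 1 := by omega
        simp only [Matrix.mulVec_single, mul_one, hA, Matrix.of_apply]
        rcases eq_or_ne ((i : ℕ)) (j + 1) with he | hne
        · have : i = (⟨j + 1, hj⟩ : Fin k) := by
            apply Fin.ext; exact he
          subst this
          simp [hjk]
        · have : i ≠ (⟨j + 1, hj⟩ : Fin k) := by
            intro hcon; apply hne; rw [hcon]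
          simp [hne, hjk, Pi.single_apply, this]
      calc B.mulVec (Pi.single ⟨j + 1, hj⟩ 1)
          = B.mulVec (A.mulVec (Pi.single ⟨j, hj'⟩ 1)) := by rw [hAe]
        _ = (B * A).mulVec (Pi.single ⟨j, hj'⟩ 1) := by rw [Matrix.mulVec_mulVec]
        _ = (A * B.map φ).mulVec (Pi.single ⟨j, hj'⟩ 1) := by rw [hBA]
        _ = A.mulVec ((B.map φ).mulVec (Pi.single ⟨j, hj'⟩ 1)) := by
            rw [Matrix.mulVec_mulVec]
        _ = Pi.single ⟨j + 1, hj⟩ 1 := by rw [hφfix, hAe]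
  -- conclude B = 1
  ext i j
  have := congrFun (key j j.isLt) i
  simp only [Matrix.mulVec_single, mul_one, MulOpposite.op_one, one_smul, Matrix.col_apply] at this
  rw [Fin.eta] at this
  rw [this]
  rw [Matrix.one_apply]
  simp [Pi.single_apply, eq_comm]
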